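/- Let α ∈ (0,1], ε ∈ (0,α), L ≥ 1, λ, κ ∈ (0,1) with κ ≤ λ and λ²·κ^{−α} < 1, and let P : ℕ → ℝ with P(n) ≥ 1 for all n. Then there exist N ∈ ℕ, K > 0 and ε₁ ∈ (0,1) such that for every integer n with N ≤ n ≤ 2N and all reals s, t with 0 < t ≤ s, s ≤ ε₁ and s ≤ L·κ^{−n}·t, one has P(n)·s·L·λⁿ + (L·λⁿ)·(K·s^{α−ε})·(L·λⁿ) ≤ K·t^{α−ε}. -/

import Mathlib

private lemma pow_rpow_comm_aux {x : ℝ} (hx : 0 ≤ x) (n : ℕ) (β : ℝ) :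
    (x ^ n) ^ β = (x ^ β) ^ n := by
  rw [← Real.rpow_natCast x n, ← Real.rpow_mul hx, mul_comm, Real.rpow_mul hx,
    Real.rpow_natCast]

/-- Numerical estimate (3.1) underlying Hölder continuity of the unstable distribution
for bunched Anosov diffeomorphisms in arbitrary dimension. -/
theorem bunched_holder_estimate
    (α ε L lam kap : ℝ) (hα : α ∈ Set.Ioc (0:ℝ) 1) (hε : ε ∈ Set.Ioo 0 α)
    (hL : 1 ≤ L) (hlam : lam ∈ Set.Ioo (0:ℝ) 1) (hkap : kap ∈ Set.Ioo (0:ℝ) 1)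
    (hkl : kap ≤ lam) (hbunch : lam ^ 2 * kap ^ (-α) < 1)
    (P : ℕ → ℝ) (hP : ∀ n, 1 ≤ P n) :
    ∃ N : ℕ, ∃ K > (0:ℝ), ∃ ε₁ ∈ Set.Ioo (0:ℝ) 1,
      ∀ n : ℕ, N ≤ n → n ≤ 2 * N →
      ∀ s t : ℝ, 0 < t → t ≤ s → s ≤ ε₁ → s ≤ L * kap ^ (-(n:ℤ)) * t →
        P n * s * (L * lam ^ n) + (L * lam ^ n) * (K * s ^ (α - ε)) * (L * lam ^ n) ≤
          K * t ^ (α - ε) := by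
  obtain ⟨hα0, hα1⟩ := hα
  obtain ⟨hε0, hεα⟩ := hε
  obtain ⟨hlam0, hlam1⟩ := hlam
  obtain ⟨hkap0, hkap1⟩ := hkap
  have hL0 : (0:ℝ) < L := lt_of_lt_of_le one_pos hL
  set β := α - ε with hβdef
  have hβ0 : 0 < β := sub_pos.2 hεα
  have hβ1 : β ≤ 1 := by simp only [hβdef]; linarith
  set q : ℝ := kap⁻¹ ^ β with hqdef
  have hq0 : 0 < q := Real.rpow_pos_of_pos (inv_pos.2 hkap0) _
  have hq_eq : q = kap ^ (-β) := by
    rw [hqdef, Real.inv_rpow hkap0.le, ← Real.rpow_neg hkap0.le]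
  have hρlt : lam ^ 2 * q < 1 := by
    have h1 : kap ^ ε ≤ 1 := Real.rpow_le_one hkap0.le hkap1.le hε0.le
    have h2 : kap ^ (-β) = kap ^ (-α) * kap ^ ε := by
      rw [← Real.rpow_add hkap0, hβdef]; ring_nf
    have h3 : 0 < lam ^ 2 * kap ^ (-α) := by positivity
    have h4 : 0 < kap ^ ε := Real.rpow_pos_of_pos hkap0 _
    calc lam ^ 2 * q = lam ^ 2 * kap ^ (-α) * kap ^ ε := by rw [hq_eq, h2]; ring
      _ ≤ lam ^ 2 * kap ^ (-α) * 1 := by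
          exact mul_le_mul_of_nonneg_left h1 h3.le
      _ < 1 := by rwa [mul_one]
  set ρ : ℝ := lam ^ 2 * q with hρdef
  have hρ0 : 0 < ρ := by positivity
  set Lβ : ℝ := L ^ β with hLβdef
  have hLβ0 : 0 < Lβ := Real.rpow_pos_of_pos hL0 _
  have hD0 : (0:ℝ) < L ^ 2 * Lβ := by positivity
  obtain ⟨N, hN⟩ := exists_pow_lt_of_lt_one (inv_pos.2 (by positivity : (0:ℝ) < 2 * (L ^ 2 * Lβ))) hρlt
  set c : ℝ := lam * q with hcdef
  have hc0 : 0 < c := by positivity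
  have hNmem : N ∈ Finset.Icc N (2 * N) := Finset.mem_Icc.2 ⟨le_refl _, by omega⟩
  have hne : (Finset.Icc N (2 * N)).Nonempty := ⟨N, hNmem⟩
  set S : ℝ := (Finset.Icc N (2 * N)).sup' hne (fun m => P m * c ^ m) with hSdef
  have hS0 : 0 < S :=
    lt_of_lt_of_le (by have := hP N; positivity : (0:ℝ) < P N * c ^ N)
      (Finset.le_sup' (fun m => P m * c ^ m) hNmem)
  set K : ℝ := 2 * (L * Lβ) * S with hKdef
  have hK0 : 0 < K := by positivity
  refine ⟨N, K, hK0, 1/2, by norm_num, ?_⟩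
  intro n hn1 hn2 s t ht hts hsε hsk
  have hs0 : 0 < s := lt_of_lt_of_le ht hts
  have htβ : 0 < t ^ β := Real.rpow_pos_of_pos ht β
  have hs1 : s ≤ 1 := le_trans hsε (by norm_num)
  have hsle : s ≤ s ^ β := by
    nth_rewrite 1 [← Real.rpow_one s]
    exact Real.rpow_le_rpow_of_exponent_ge hs0 hs1 hβ1
  have hkz : kap ^ (-(n:ℤ)) = kap⁻¹ ^ n := by
    rw [zpow_neg, zpow_natCast, inv_pow]
  have hkzpos : (0:ℝ) < kap⁻¹ ^ n := by positivity
  have hsb : s ^ β ≤ Lβ * q ^ n * t ^ β := by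
    have h1 : s ^ β ≤ (L * kap ^ (-(n:ℤ)) * t) ^ β :=
      Real.rpow_le_rpow hs0.le hsk hβ0.le
    have h2 : (L * kap ^ (-(n:ℤ)) * t) ^ β = Lβ * q ^ n * t ^ β := by
      rw [hkz, Real.mul_rpow (by positivity) ht.le,
        Real.mul_rpow hL0.le hkzpos.le,
        pow_rpow_comm_aux (by positivity) n β, hLβdef, hqdef]
    rwa [h2] at h1
  have hsb' : s ≤ Lβ * q ^ n * t ^ β := le_trans hsle hsb
  have hρn : L ^ 2 * Lβ * ρ ^ n ≤ 1 / 2 := by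
    have h1 : ρ ^ n ≤ ρ ^ N := pow_le_pow_of_le_one hρ0.le hρlt.le hn1
    have h2 : L ^ 2 * Lβ * ρ ^ N < L ^ 2 * Lβ * (2 * (L ^ 2 * Lβ))⁻¹ :=
      mul_lt_mul_of_pos_left hN hD0
    have h3 : L ^ 2 * Lβ * (2 * (L ^ 2 * Lβ))⁻¹ = 1 / 2 := by
      field_simp
    nlinarith [mul_le_mul_of_nonneg_left h1 hD0.le]
  have hPn0 : (0:ℝ) ≤ P n := le_trans zero_le_one (hP n)
  have hPS : P n * c ^ n ≤ S :=
    Finset.le_sup' (fun m => P m * c ^ m) (Finset.mem_Icc.2 ⟨hn1, hn2⟩)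
  have hlamn : (0:ℝ) ≤ L * lam ^ n := by positivity
  have e1 : c ^ n = lam ^ n * q ^ n := mul_pow _ _ _
  have e2 : ρ ^ n = (lam ^ n) ^ 2 * q ^ n := by
    rw [hρdef, mul_pow, ← pow_mul, mul_comm 2 n, pow_mul]
  calc P n * s * (L * lam ^ n) + (L * lam ^ n) * (K * s ^ β) * (L * lam ^ n)
      ≤ P n * (Lβ * q ^ n * t ^ β) * (L * lam ^ n)
        + (L * lam ^ n) * (K * (Lβ * q ^ n * t ^ β)) * (L * lam ^ n) := by
        gcongr
    _ = (P n * c ^ n) * ((L * Lβ) * t ^ β) + K * (L ^ 2 * Lβ * ρ ^ n) * t ^ β := by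
        rw [e1, e2]; ring
    _ ≤ S * ((L * Lβ) * t ^ β) + K * (1 / 2) * t ^ β := by
        gcongr
    _ = K * t ^ β := by rw [hKdef]; ring
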